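/- Let d ≥ 1 and let h ∈ F₂[[z]] be the power series whose coefficient at z^m is 1 if and only if m ≥ 1 and ν₂(m) ≡ 0 (mod d). Then (1 + z) · Σ_{n=0}^{d−1} h^{2^n} + z = 0 in F₂[[z]]. -/

import Mathlib

open PowerSeries

lemma zmod2_add_self (x : ZMod 2) : x + x = 0 := by revert x; decide
lemma zmod2_mul_self (x : ZMod 2) : x * x = x := by revert x; decide

lemma ps_add_self (f : PowerSeries (ZMod 2)) : f + f = 0 := by
  ext m; rw [map_add]; exact zmod2_add_self _

lemma coeff_sq (f : PowerSeries (ZMod 2)) (m : ℕ) :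
    (PowerSeries.coeff m) (f * f) =
      if 2 ∣ m then PowerSeries.coeff (m / 2) f else 0 := by
  rw [PowerSeries.coeff_mul]
  by_cases hm : 2 ∣ m
  · obtain ⟨k, rfl⟩ := hm
    have hk : ((k, k) : ℕ × ℕ) ∈ Finset.HasAntidiagonal.antidiagonal (2 * k) := by
      simp [Finset.HasAntidiagonal.mem_antidiagonal, two_mul]
    rw [← Finset.add_sum_erase _ _ hk]
    have hzero : ∑ p ∈ (Finset.HasAntidiagonal.antidiagonal (2 * k)).erase (k, k),
        (PowerSeries.coeff p.1) f * (PowerSeries.coeff p.2) f = 0 := by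
      refine Finset.sum_involution (fun p _ => p.swap) ?_ ?_ ?_ ?_
      · intro p _
        simp only [Prod.fst_swap, Prod.snd_swap]
        rw [mul_comm]
        exact zmod2_add_self _
      · intro p hp _
        rcases Finset.mem_erase.mp hp with ⟨hne, hmem⟩
        intro hsw
        apply hne
        have h1 : p.2 = p.1 := congrArg Prod.fst hsw
        have h2 : p.1 + p.2 = 2 * k := Finset.HasAntidiagonal.mem_antidiagonal.mp hmem
        have : p.1 = k := by omega
        have : p.2 = k := by omega
        ext <;> simp_all
      · intro p hp
        rcases Finset.mem_erase.mp hp with ⟨hne, hmem⟩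
        refine Finset.mem_erase.mpr ⟨?_, ?_⟩
        · intro hsw
          apply hne
          have h1 : p.2 = k := congrArg Prod.fst hsw
          have h2 : p.1 = k := congrArg Prod.snd hsw
          ext <;> simp_all
        · show p.swap ∈ _
          have h2 : p.1 + p.2 = 2 * k := Finset.HasAntidiagonal.mem_antidiagonal.mp hmem
          rw [Finset.HasAntidiagonal.mem_antidiagonal, Prod.fst_swap, Prod.snd_swap]
          omega
      · intro p _; rfl
    rw [hzero, add_zero, if_pos ⟨k, rfl⟩, Nat.mul_div_cancel_left k (by norm_num)]
    exact zmod2_mul_self _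
  · rw [if_neg hm]
    refine Finset.sum_involution (fun p _ => p.swap) ?_ ?_ ?_ ?_
    · intro p _
      simp only [Prod.fst_swap, Prod.snd_swap]
      rw [mul_comm]
      exact zmod2_add_self _
    · intro p hp _
      have h2 : p.1 + p.2 = m := Finset.HasAntidiagonal.mem_antidiagonal.mp hp
      intro hsw
      have h1 : p.2 = p.1 := congrArg Prod.fst hsw
      exact hm ⟨p.1, by omega⟩
    · intro p hp
      show p.swap ∈ _
      have h2 : p.1 + p.2 = m := Finset.HasAntidiagonal.mem_antidiagonal.mp hp
      rw [Finset.HasAntidiagonal.mem_antidiagonal, Prod.fst_swap, Prod.snd_swap]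
      omega
    · intro p _; rfl

lemma coeff_pow2 (n : ℕ) (f : PowerSeries (ZMod 2)) (m : ℕ) :
    (PowerSeries.coeff m) (f ^ 2 ^ n) =
      if 2 ^ n ∣ m then PowerSeries.coeff (m / 2 ^ n) f else 0 := by
  induction n generalizing f m with
  | zero => simp
  | succ n ih =>
    have : f ^ 2 ^ (n + 1) = (f * f) ^ 2 ^ n := by
      rw [← sq, ← pow_mul, pow_succ, mul_comm (2 ^ n) 2, pow_mul, sq]
    rw [this, ih, coeff_sq]
    by_cases h1 : 2 ^ n ∣ m
    · rw [if_pos h1]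
      by_cases h2 : 2 ∣ m / 2 ^ n
      · rw [if_pos h2, if_pos, Nat.div_div_eq_div_mul, ← pow_succ]
        obtain ⟨t, ht⟩ := h2
        obtain ⟨s, hs⟩ := h1
        exact ⟨t, by rw [hs, pow_succ]; rw [hs, Nat.mul_div_cancel_left _ (Nat.pow_pos (n := n) (by norm_num))] at ht; rw [ht]; ring⟩
      · rw [if_neg h2, if_neg]
        intro hdvd
        apply h2
        obtain ⟨t, ht⟩ := hdvd
        rw [ht, pow_succ, mul_assoc, Nat.mul_div_cancel_left _ (Nat.pow_pos (n := n) (by norm_num))]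
        exact ⟨t, rfl⟩
    · rw [if_neg h1, if_neg]
      intro hdvd
      exact h1 (dvd_trans (pow_dvd_pow 2 (Nat.le_succ n)) hdvd)

/-- Let `h ∈ F₂[[z]]` have coefficient 1 at `z^m` exactly when
`m ≥ 1` and `ν₂(m) ≡ 0 (mod d)`.  Then `(1+z)·Σ_{n=0}^{d−1} h^{2^n} + z = 0`. -/
theorem stmt9 (d : ℕ) (hd : 1 ≤ d)
    (h : PowerSeries (ZMod 2))
    (hh : h = PowerSeries.mk fun m =>
      if 1 ≤ m ∧ padicValNat 2 m % d = 0 then 1 else 0) :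
    (1 + PowerSeries.X) * ∑ n ∈ Finset.range d, h ^ 2 ^ n + PowerSeries.X = 0 := by
  have hS : ∑ n ∈ Finset.range d, h ^ 2 ^ n =
      PowerSeries.mk (fun m => if 1 ≤ m then (1 : ZMod 2) else 0) := by
    ext m
    rw [map_sum, PowerSeries.coeff_mk]
    have hterm : ∀ n ∈ Finset.range d, (PowerSeries.coeff m) (h ^ 2 ^ n) =
        if 1 ≤ m ∧ n = padicValNat 2 m % d then (1 : ZMod 2) else 0 := by
      intro n hn
      have hnd : n < d := Finset.mem_range.mp hn
      rw [hh, coeff_pow2, ]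
      by_cases hm : 1 ≤ m
      · have hm0 : m ≠ 0 := by omega
        by_cases hdvd : 2 ^ n ∣ m
        · rw [if_pos hdvd, PowerSeries.coeff_mk]
          have hle : n ≤ padicValNat 2 m := (padicValNat_dvd_iff_le hm0).mp hdvd
          have hq : m / 2 ^ n ≠ 0 := by
            have := Nat.div_pos (Nat.le_of_dvd (by omega) hdvd) (Nat.pow_pos (n := n) (by norm_num))
            omega
          have hv : padicValNat 2 (m / 2 ^ n) = padicValNat 2 m - n :=
            padicValNat.div_pow hdvd
          by_cases hc : padicValNat 2 (m / 2 ^ n) % d = 0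
          · rw [if_pos ⟨Nat.one_le_iff_ne_zero.mpr hq, hc⟩, if_pos]
            constructor
            · exact hm
            · rw [hv] at hc
              have : d ∣ padicValNat 2 m - n := Nat.dvd_of_mod_eq_zero hc
              obtain ⟨t, ht⟩ := this
              have : padicValNat 2 m = n + d * t := by omega
              rw [this]
              rw [Nat.add_mul_mod_self_left]
              exact (Nat.mod_eq_of_lt hnd).symm
          · rw [if_neg (by tauto), if_neg]
            rintro ⟨-, hn2⟩
            apply hc
            rw [hv]
            subst hn2
            have hdm := Nat.div_add_mod (padicValNat 2 m) d
            have hvd : padicValNat 2 m - padicValNat 2 m % d = d * (padicValNat 2 m / d) := by omega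
            rw [hvd, Nat.mul_mod_right]
        · rw [if_neg hdvd, if_neg]
          rintro ⟨-, hn2⟩
          apply hdvd
          rw [padicValNat_dvd_iff_le hm0]
          subst hn2
          exact Nat.mod_le _ _
      · have hm0 : m = 0 := by omega
        subst hm0
        simp
    rw [Finset.sum_congr rfl hterm]
    by_cases hm : 1 ≤ m
    · simp only [hm, true_and]
      rw [Finset.sum_ite_eq' (Finset.range d)]
      rw [if_pos (Finset.mem_range.mpr (Nat.mod_lt _ (by omega)))]
      simp [hm]
    · simp [hm]
  rw [hS]
  have key : (1 + PowerSeries.X) * PowerSeries.mk (fun m => if 1 ≤ m then (1 : ZMod 2) else 0)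
      = PowerSeries.X := by
    ext m
    rw [add_mul, one_mul, map_add]
    cases m with
    | zero => simp
    | succ k =>
      rw [PowerSeries.coeff_succ_X_mul, PowerSeries.coeff_mk, PowerSeries.coeff_mk,
        PowerSeries.coeff_X]
      cases k with
      | zero => simp
      | succ j => simp only [Nat.succ_le_succ (Nat.zero_le _), if_true]
                  norm_num
                  decide
  rw [key]
  exact ps_add_self _
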